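/- Let H be a real Hilbert space, K ⊆ H nonempty closed convex, and a : H × H → ℝ a continuous coercive symmetric bilinear form. Then the functional E(v) = (1/2)a(v,v) − ⟨f, v⟩ has a unique minimizer on K, and hence the variational inequality a(u, v−u) ≥ ⟨f, v−u⟩ for all v ∈ K has a unique solution u ∈ K. -/

import Mathlib

open Filter Topology

section
variable {H : Type*} [NormedAddCommGroup H] [InnerProductSpace ℝ H]

/-- The energy functional of the variational problem. -/
noncomputable def viEfun (a : H →ₗ[ℝ] H →ₗ[ℝ] ℝ) (f : H) (v : H) : ℝ :=
  (1 / 2) * a v v - (inner ℝ f v : ℝ)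

lemma viEfun_expand (a : H →ₗ[ℝ] H →ₗ[ℝ] ℝ) (f : H)
    (hsymm : ∀ u v : H, a u v = a v u) (u v : H) (t : ℝ) :
    viEfun a f (u + t • v) =
      viEfun a f u + t * (a u v - (inner ℝ f v : ℝ)) + t ^ 2 / 2 * a v v := by
  simp only [viEfun, map_add, map_smul, LinearMap.add_apply, LinearMap.smul_apply,
    smul_eq_mul, inner_add_right, real_inner_smul_right]
  linear_combination (t / 2) * hsymm v u

lemma viEfun_diff (a : H →ₗ[ℝ] H →ₗ[ℝ] ℝ) (f : H)
    (hsymm : ∀ u v : H, a u v = a v u) (u v : H) :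
    viEfun a f v - viEfun a f u =
      (a u (v - u) - (inner ℝ f (v - u) : ℝ)) + (1 / 2) * a (v - u) (v - u) := by
  simp only [viEfun, map_sub, LinearMap.sub_apply, inner_sub_right]
  linear_combination (1 / 2) * hsymm v u

lemma viEfun_parallelogram (a : H →ₗ[ℝ] H →ₗ[ℝ] ℝ) (f : H) (u w : H) :
    viEfun a f u + viEfun a f w - 2 * viEfun a f ((1/2 : ℝ) • u + (1/2 : ℝ) • w) =
      (1 / 4) * a (u - w) (u - w) := by
  simp only [viEfun, map_add, map_sub, map_smul, LinearMap.add_apply, LinearMap.sub_apply,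
    LinearMap.smul_apply, smul_eq_mul, inner_add_right, real_inner_smul_right]
  ring_nf

end

theorem vi_existence_uniqueness {H : Type*} [NormedAddCommGroup H] [InnerProductSpace ℝ H]
    [CompleteSpace H] (K : Set H) (hK : K.Nonempty) (hKc : IsClosed K) (hKconv : Convex ℝ K)
    (a : H →ₗ[ℝ] H →ₗ[ℝ] ℝ) (C : ℝ) (hbound : ∀ u v : H, |a u v| ≤ C * ‖u‖ * ‖v‖)
    (hsymm : ∀ u v : H, a u v = a v u)
    (α : ℝ) (hα : 0 < α) (hcoer : ∀ v : H, α * ‖v‖ ^ 2 ≤ a v v)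
    (f : H) :
    (∃! u : H, u ∈ K ∧
        ∀ v ∈ K, (1 / 2) * a u u - (inner ℝ f u : ℝ) ≤ (1 / 2) * a v v - (inner ℝ f v : ℝ)) ∧
    (∃! u : H, u ∈ K ∧ ∀ v ∈ K, a u (v - u) ≥ (inner ℝ f (v - u) : ℝ)) := by
  have hQnn : ∀ v : H, (0 : ℝ) ≤ a v v := fun v => le_trans (by positivity) (hcoer v)
  -- equivalence of minimization and VI
  have hequiv : ∀ u : H, u ∈ K →
      ((∀ v ∈ K, viEfun a f u ≤ viEfun a f v) ↔
        (∀ v ∈ K, a u (v - u) ≥ (inner ℝ f (v - u) : ℝ))) := by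
    intro u hu
    constructor
    · intro hmin v hv
      by_contra hlt
      push_neg at hlt
      set g : ℝ := a u (v - u) - (inner ℝ f (v - u) : ℝ) with hg
      have hgneg : g < 0 := by rw [hg]; linarith
      set Q : ℝ := a (v - u) (v - u) with hQ
      have hQ0 : 0 ≤ Q := hQnn _
      set t : ℝ := min 1 ((-g) / (2 * (Q + 1))) with ht
      have ht0 : 0 < t := lt_min one_pos (div_pos (by linarith) (by positivity))
      have ht1 : t ≤ 1 := min_le_left _ _
      have ht2 : t ≤ (-g) / (2 * (Q + 1)) := min_le_right _ _
      have ht2' : t * (2 * (Q + 1)) ≤ -g :=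
        (le_div_iff₀ (by positivity : (0:ℝ) < 2 * (Q + 1))).mp ht2
      have hmem : u + t • (v - u) ∈ K := by
        have h := hKconv hu hv (by linarith : (0:ℝ) ≤ 1 - t) (le_of_lt ht0) (by ring)
        have heq : (1 - t) • u + t • v = u + t • (v - u) := by
          rw [smul_sub, sub_smul, one_smul]; abel
        rwa [heq] at h
      have hkey := hmin _ hmem
      rw [viEfun_expand a f hsymm u (v - u) t] at hkey
      have hmain : 0 ≤ t * g + t ^ 2 / 2 * Q := by rw [hg, hQ]; linarith
      nlinarith [mul_le_mul_of_nonneg_left ht2' (le_of_lt ht0), mul_pos ht0 ht0]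
    · intro hvi v hv
      have h := hvi v hv
      have hd := viEfun_diff a f hsymm u v
      have hQ0 : 0 ≤ a (v - u) (v - u) := hQnn _
      linarith
  -- uniqueness for the VI
  have hVIuniq : ∀ u₁ u₂ : H, u₁ ∈ K → u₂ ∈ K →
      (∀ v ∈ K, a u₁ (v - u₁) ≥ (inner ℝ f (v - u₁) : ℝ)) →
      (∀ v ∈ K, a u₂ (v - u₂) ≥ (inner ℝ f (v - u₂) : ℝ)) → u₁ = u₂ := by
    intro u₁ u₂ h1K h2K h1 h2
    have ha := h1 u₂ h2K
    have hb := h2 u₁ h1K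
    have hkey : a (u₁ - u₂) (u₁ - u₂) ≤ 0 := by
      have hs := hsymm u₁ u₂
      simp only [map_sub, LinearMap.sub_apply, inner_sub_right] at ha hb ⊢
      linarith
    have h3 : ‖u₁ - u₂‖ ^ 2 ≤ 0 := by
      by_contra h
      push_neg at h
      nlinarith [hcoer (u₁ - u₂)]
    have h5 : ‖u₁ - u₂‖ ^ 2 = 0 := le_antisymm h3 (by positivity)
    have h6 : ‖u₁ - u₂‖ = 0 :=
      (pow_eq_zero_iff two_ne_zero).mp h5
    exact sub_eq_zero.mp (norm_eq_zero.mp h6)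
  -- existence of a minimizer
  have hbdd : BddBelow (viEfun a f '' K) := by
    refine ⟨-(‖f‖ ^ 2 / (2 * α)) - 1, ?_⟩
    rintro x ⟨v, hv, rfl⟩
    have h1 := hcoer v
    have h2 := real_inner_le_norm f v
    have hB : 2 * α * (‖f‖ ^ 2 / (2 * α)) = ‖f‖ ^ 2 := by field_simp
    simp only [viEfun]
    nlinarith [sq_nonneg (α * ‖v‖ - ‖f‖), norm_nonneg v, norm_nonneg f]
  have hne : (viEfun a f '' K).Nonempty := hK.image _
  set d : ℝ := sInf (viEfun a f '' K) with hd
  have hdle : ∀ v ∈ K, d ≤ viEfun a f v := fun v hv => csInf_le hbdd ⟨v, hv, rfl⟩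
  have hseq : ∀ n : ℕ, ∃ x, x ∈ K ∧ viEfun a f x < d + 1 / (n + 1) := by
    intro n
    have hlt : d < d + 1 / ((n : ℝ) + 1) := by
      have : (0:ℝ) < 1 / ((n : ℝ) + 1) := by positivity
      linarith
    obtain ⟨x, ⟨v, hv, rfl⟩, hxlt⟩ := exists_lt_of_csInf_lt hne hlt
    exact ⟨v, hv, hxlt⟩
  choose u huK huE using hseq
  have hdist : ∀ n m : ℕ, ‖u n - u m‖ ^ 2 ≤ (4 / α) * (1 / (n + 1) + 1 / (m + 1)) := by
    intro n m
    have hmid : (1/2 : ℝ) • u n + (1/2 : ℝ) • u m ∈ K :=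
      hKconv (huK n) (huK m) (by norm_num) (by norm_num) (by norm_num)
    have hpar := viEfun_parallelogram a f (u n) (u m)
    have h1 := huE n
    have h2 := huE m
    have h3 := hdle _ hmid
    have h4 := hcoer (u n - u m)
    have key : α * ‖u n - u m‖ ^ 2 ≤ 4 * (1 / ((n:ℝ) + 1) + 1 / ((m:ℝ) + 1)) := by
      linarith
    rw [div_mul_eq_mul_div, le_div_iff₀ hα]
    linarith
  have hcauchy : CauchySeq u := by
    refine cauchySeq_of_le_tendsto_0 (fun N => Real.sqrt ((8 / α) * (1 / ((N:ℝ) + 1)))) ?_ ?_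
    · intro n m N hn hm
      have hbn : (1:ℝ) / ((n:ℝ) + 1) ≤ 1 / ((N:ℝ) + 1) := by
        apply one_div_le_one_div_of_le (by positivity)
        have : (N:ℝ) ≤ n := Nat.cast_le.mpr hn
        linarith
      have hbm : (1:ℝ) / ((m:ℝ) + 1) ≤ 1 / ((N:ℝ) + 1) := by
        apply one_div_le_one_div_of_le (by positivity)
        have : (N:ℝ) ≤ m := Nat.cast_le.mpr hm
        linarith
      have h1 : ‖u n - u m‖ ^ 2 ≤ (8 / α) * (1 / ((N:ℝ) + 1)) := by
        have h0 := hdist n m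
        have h4α : (0:ℝ) ≤ 4 / α := by positivity
        calc ‖u n - u m‖ ^ 2 ≤ (4 / α) * (1 / ((n:ℝ) + 1) + 1 / ((m:ℝ) + 1)) := h0
          _ ≤ (4 / α) * (1 / ((N:ℝ) + 1) + 1 / ((N:ℝ) + 1)) := by
              apply mul_le_mul_of_nonneg_left (by linarith) h4α
          _ = (8 / α) * (1 / ((N:ℝ) + 1)) := by ring
      rw [dist_eq_norm]
      exact (Real.le_sqrt (norm_nonneg _) (by positivity)).mpr h1
    · have h0 : Tendsto (fun N : ℕ => (8 / α) * (1 / ((N:ℝ) + 1))) atTop (𝓝 0) := by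
        simpa using (tendsto_one_div_add_atTop_nhds_zero_nat).const_mul (8 / α)
      have := (Real.continuous_sqrt.tendsto 0).comp h0
      simpa [Function.comp_def] using this
  obtain ⟨x, hx⟩ := cauchySeq_tendsto_of_complete hcauchy
  have hxK : x ∈ K := hKc.mem_of_tendsto hx (Eventually.of_forall huK)
  have hacont : Continuous fun v : H => a v v := by
    let A := LinearMap.mkContinuous₂ a C (fun x y => by
      rw [Real.norm_eq_abs]; exact hbound x y)
    have heq : (fun v : H => a v v) = fun v => A v v := rfl
    rw [heq]
    exact A.continuous₂.comp (continuous_id.prodMk continuous_id)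
  have hEcont : Continuous (viEfun a f) := by
    have h2 : Continuous fun v : H => (inner ℝ f v : ℝ) := continuous_const.inner continuous_id
    unfold viEfun
    exact (continuous_const.mul hacont).sub h2
  have hlim1 : Tendsto (fun n => viEfun a f (u n)) atTop (𝓝 (viEfun a f x)) :=
    (hEcont.tendsto x).comp hx
  have hlim2 : Tendsto (fun n => viEfun a f (u n)) atTop (𝓝 d) := by
    apply tendsto_of_tendsto_of_tendsto_of_le_of_le (g := fun _ : ℕ => d)
      (h := fun n : ℕ => d + 1 / ((n:ℝ) + 1))
    · exact tendsto_const_nhds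
    · simpa using tendsto_const_nhds.add (tendsto_one_div_add_atTop_nhds_zero_nat :
        Tendsto (fun n : ℕ => 1 / ((n:ℝ) + 1)) atTop (𝓝 0))
    · exact fun n => hdle _ (huK n)
    · exact fun n => le_of_lt (huE n)
  have hxd : viEfun a f x = d := tendsto_nhds_unique hlim1 hlim2
  have hxmin : ∀ v ∈ K, viEfun a f x ≤ viEfun a f v := fun v hv => by
    rw [hxd]; exact hdle v hv
  have hxvi := (hequiv x hxK).mp hxmin
  constructor
  · refine ⟨x, ⟨hxK, fun v hv => hxmin v hv⟩, ?_⟩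
    rintro y ⟨hyK, hymin⟩
    exact hVIuniq y x hyK hxK ((hequiv y hyK).mp fun v hv => hymin v hv) hxvi
  · refine ⟨x, ⟨hxK, hxvi⟩, ?_⟩
    rintro y ⟨hyK, hyvi⟩
    exact hVIuniq y x hyK hxK hyvi hxvi
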